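/- arXiv:2601.08387 — 2 statements merged into one kernel-verified Lean document; each statement's English description precedes it below -/
import Mathlib

section
/- Let H_a ∈ F_2^{r_a×n_a} and H_b ∈ F_2^{r_b×n_b}. Define H_1 = (H_a ⊗ I_{n_b} | I_{r_a} ⊗ H_b^T) and H_2 = (I_{n_a} ⊗ H_b | H_a^T ⊗ I_{r_b}). Then H_1 H_2^T = 0. -/
open Matrix

open Kronecker

theorem kron_transpose {l m n p : Type*} {α : Type*} [CommRing α]
    (A : Matrix l m α) (B : Matrix n p α) : (A ⊗ₖ B)ᵀ = Aᵀ ⊗ₖ Bᵀ :=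
  (kroneckerMap_transpose _ A B).symm

/-- Hypergraph product construction: `H₁ H₂ᵀ = 0` over `F₂`. -/
theorem stmt2 {ra na rb nb : ℕ}
    (Ha : Matrix (Fin ra) (Fin na) (ZMod 2)) (Hb : Matrix (Fin rb) (Fin nb) (ZMod 2)) :
    Matrix.fromCols (Ha ⊗ₖ (1 : Matrix (Fin nb) (Fin nb) (ZMod 2)))
        ((1 : Matrix (Fin ra) (Fin ra) (ZMod 2)) ⊗ₖ Hbᵀ) *
      (Matrix.fromCols ((1 : Matrix (Fin na) (Fin na) (ZMod 2)) ⊗ₖ Hb)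
        (Haᵀ ⊗ₖ (1 : Matrix (Fin rb) (Fin rb) (ZMod 2))))ᵀ = 0 := by
  rw [transpose_fromCols, fromCols_mul_fromRows, kron_transpose, kron_transpose,
    transpose_one, transpose_one, transpose_transpose,
    ← mul_kronecker_mul, ← mul_kronecker_mul, Matrix.mul_one, Matrix.one_mul]
  ext i j
  simp [CharTwo.add_self_eq_zero]
end

section
/- Fix n, r, v ∈ ℕ with v, r ≤ n. Let H ∈ F_2^{r×n} be a random matrix whose r rows are independent uniform samples from the Hamming sphere of radius v. For any w ≤ n, the expected number of vectors c ∈ F_2^n with Hamming weight w satisfying H c^T = 0 equals m_w = C(n,w)·ρ_w^r, where ρ_w = Σ_{i even, 0 ≤ i ≤ min(w,v)} C(v,i)·C(n−v,w−i) / C(n,w). -/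
/-- The probability that a uniform weight-`v` row is orthogonal to a fixed weight-`w`
vector. -/
def rho (n v w : ℕ) : ℚ :=
  ∑ i ∈ Finset.range (min w v + 1),
    if Even i then (v.choose i * (n - v).choose (w - i) : ℚ) / (n.choose w : ℚ) else 0

open Finset

namespace Stmt5Aux

variable {n : ℕ}

/-- support of a vector over `ZMod 2` -/
def supp (h : Fin n → ZMod 2) : Finset (Fin n) :=
  Finset.univ.filter fun j => h j ≠ 0

lemma hammingNorm_eq (h : Fin n → ZMod 2) : hammingNorm h = (supp h).card := rfl

lemma card_filter_supp (p : Finset (Fin n) → Prop) [DecidablePred p] :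
    (univ.filter fun h : Fin n → ZMod 2 => p (supp h)).card
      = (univ.filter p).card := by
  apply Finset.card_nbij' (fun h => supp h)
      (fun s => fun j => if j ∈ s then 1 else 0)
  · intro h hh
    simp only [Finset.mem_coe, mem_filter, mem_univ, true_and] at hh ⊢
    exact hh
  · intro s hs
    simp only [Finset.mem_coe, mem_filter, mem_univ, true_and] at hs ⊢
    have : supp (fun j => if j ∈ s then (1 : ZMod 2) else 0) = s := by
      ext j; simp [supp]
    rwa [this]
  · intro h _
    funext j
    have h2 : ∀ a : ZMod 2, a = 0 ∨ a = 1 := by decide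
    rcases h2 (h j) with h0 | h0 <;> simp [supp, h0]
  · intro s _
    ext j; simp [supp]

lemma dot_eq_zero_iff (h c : Fin n → ZMod 2) :
    dotProduct h c = 0 ↔ Even ((supp h ∩ supp c).card) := by
  have key : ∀ a b : ZMod 2, a * b = if a ≠ 0 ∧ b ≠ 0 then 1 else 0 := by decide
  have : dotProduct h c
      = ((univ.filter fun j => h j ≠ 0 ∧ c j ≠ 0).card : ZMod 2) := by
    rw [dotProduct]
    simp_rw [key]
    exact Finset.sum_boole _ _
  rw [this, ZMod.natCast_eq_zero_iff]
  have : supp h ∩ supp c = univ.filter fun j => h j ≠ 0 ∧ c j ≠ 0 := by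
    simp [supp, Finset.filter_and]
  rw [this, even_iff_two_dvd]

lemma card_inter_eq (S : Finset (Fin n)) (v i : ℕ) (hi : i ≤ v) :
    (univ.filter fun s : Finset (Fin n) => s.card = v ∧ (s ∩ S).card = i).card
      = S.card.choose i * (n - S.card).choose (v - i) := by
  have hSc : Sᶜ.card = n - S.card := by simp [Finset.card_compl]
  rw [← Finset.card_powersetCard i S, ← hSc, ← Finset.card_powersetCard (v - i) Sᶜ,
    ← Finset.card_product]
  apply Finset.card_nbij' (fun s => (s ∩ S, s \ S)) (fun p => p.1 ∪ p.2)
  · intro s hs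
    simp only [Finset.mem_coe, mem_filter, mem_univ, true_and] at hs
    obtain ⟨hcard, hint⟩ := hs
    have hsd : (s ∩ S).card + (s \ S).card = s.card := Finset.card_inter_add_card_sdiff s S
    simp only [Finset.mem_coe, Finset.mem_product, Finset.mem_powersetCard]
    refine ⟨⟨Finset.inter_subset_right, hint⟩, ?_, by omega⟩
    intro j hj
    simp only [Finset.mem_sdiff] at hj
    simp [hj.2]
  · intro p hp
    simp only [Finset.mem_coe, Finset.mem_product, Finset.mem_powersetCard] at hp
    obtain ⟨⟨h1s, h1c⟩, h2s, h2c⟩ := hp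
    have hdisj : Disjoint p.1 p.2 := by
      refine Finset.disjoint_left.2 fun a ha1 ha2 => ?_
      have := h2s ha2
      simp only [Finset.mem_compl] at this
      exact this (h1s ha1)
    simp only [Finset.mem_coe, mem_filter, mem_univ, true_and]
    constructor
    · rw [Finset.card_union_of_disjoint hdisj, h1c, h2c]; omega
    · have e1 : p.1 ∩ S = p.1 := Finset.inter_eq_left.2 h1s
      have e2 : p.2 ∩ S = ∅ := by
        refine Finset.eq_empty_of_forall_notMem fun a ha => ?_
        simp only [Finset.mem_inter] at ha
        have := h2s ha.1
        simp only [Finset.mem_compl] at this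
        exact this ha.2
      rw [Finset.union_inter_distrib_right, e1, e2, Finset.union_empty, h1c]
  · intro s _
    simp only
    ext a
    simp only [Finset.mem_union, Finset.mem_inter, Finset.mem_sdiff]
    tauto
  · intro p hp
    simp only [Finset.mem_coe, Finset.mem_product, Finset.mem_powersetCard] at hp
    obtain ⟨⟨h1s, h1c⟩, h2s, h2c⟩ := hp
    have e1 : p.1 ∩ S = p.1 := Finset.inter_eq_left.2 h1s
    have e2 : p.2 ∩ S = ∅ := by
      refine Finset.eq_empty_of_forall_notMem fun a ha => ?_
      simp only [Finset.mem_inter] at ha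
      have := h2s ha.1
      simp only [Finset.mem_compl] at this
      exact this ha.2
    have e3 : (p.1 ∪ p.2) ∩ S = p.1 := by
      rw [Finset.union_inter_distrib_right, e1, e2, Finset.union_empty]
    have e4 : (p.1 ∪ p.2) \ S = p.2 := by
      ext a
      simp only [Finset.mem_sdiff, Finset.mem_union]
      constructor
      · rintro ⟨h1 | h2, hns⟩
        · exact absurd (h1s h1) hns
        · exact h2
      · intro h2
        have := h2s h2
        simp only [Finset.mem_compl] at this
        exact ⟨Or.inr h2, this⟩
    rw [Prod.ext_iff]
    exact ⟨e3, e4⟩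

/-- number of weight-`v` sets meeting `S` in an even number of points -/
lemma countN (S : Finset (Fin n)) (v : ℕ) :
    (univ.filter fun s : Finset (Fin n) => s.card = v ∧ Even ((s ∩ S).card)).card
      = ∑ i ∈ range (v + 1),
          if Even i then S.card.choose i * (n - S.card).choose (v - i) else 0 := by
  rw [Finset.card_eq_sum_card_fiberwise
    (f := fun s : Finset (Fin n) => (s ∩ S).card) (t := range (v + 1))]
  · apply Finset.sum_congr rfl
    intro i hi
    rw [Finset.mem_range] at hi
    by_cases he : Even i
    · rw [if_pos he, ← card_inter_eq S v i (by omega)]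
      congr 1
      ext s
      simp only [Finset.mem_filter, Finset.mem_univ, true_and]
      constructor
      · rintro ⟨⟨h1, _⟩, h3⟩; exact ⟨h1, h3⟩
      · rintro ⟨h1, h3⟩; exact ⟨⟨h1, h3 ▸ he⟩, h3⟩
    · rw [if_neg he]
      rw [Finset.card_eq_zero]
      refine Finset.eq_empty_of_forall_notMem fun s hs => ?_
      simp only [Finset.mem_filter, Finset.mem_univ, true_and] at hs
      exact he (hs.2 ▸ hs.1.2)
  · intro s hs
    simp only [Finset.mem_coe, Finset.mem_filter, Finset.mem_univ, true_and] at hs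
    simp only [Finset.mem_coe, Finset.mem_range]
    have : (s ∩ S).card ≤ s.card := Finset.card_le_card Finset.inter_subset_left
    omega

lemma choose_id {n v w i : ℕ} (hv : v ≤ n) (hw : w ≤ n) (hiv : i ≤ v) (hiw : i ≤ w) :
    n.choose v * (v.choose i * (n - v).choose (w - i))
      = n.choose w * (w.choose i * (n - w).choose (v - i)) := by
  have key : ∀ a b m : ℕ, m.choose a * (m - a).choose b = m.choose b * (m - b).choose a := by
    intro a b m
    by_cases hab : a + b ≤ m
    · have e1 := Nat.choose_mul (n := m) (k := a + b) (s := a) (Nat.le_add_right a b)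
      have e2 := Nat.choose_mul (n := m) (k := a + b) (s := b) (Nat.le_add_left b a)
      rw [Nat.add_sub_cancel_left] at e1
      rw [Nat.add_sub_cancel] at e2
      rw [← e1, ← e2, Nat.choose_symm_add, Nat.add_comm a b, Nat.choose_symm_add]
    · by_cases ha : a ≤ m
      · by_cases hb : b ≤ m
        · rw [Nat.choose_eq_zero_of_lt (show m - a < b by omega),
            Nat.choose_eq_zero_of_lt (show m - b < a by omega)]
          ring
        · rw [Nat.choose_eq_zero_of_lt (show m < b by omega),
            Nat.choose_eq_zero_of_lt (show m - a < b by omega)]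
          ring
      · by_cases hb : b ≤ m
        · rw [Nat.choose_eq_zero_of_lt (show m < a by omega),
            Nat.choose_eq_zero_of_lt (show m - b < a by omega)]
          ring
        · rw [Nat.choose_eq_zero_of_lt (show m < a by omega),
            Nat.choose_eq_zero_of_lt (show m < b by omega)]
          ring
  rw [← mul_assoc, Nat.choose_mul hiv, ← mul_assoc (n.choose w), Nat.choose_mul hiw,
    mul_assoc, mul_assoc]
  congr 1
  have e1 : n - v = (n - i) - (v - i) := by omega
  have e2 : n - w = (n - i) - (w - i) := by omega
  rw [e1, e2, key]

lemma weight_card (w : ℕ) :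
    (univ.filter fun c : Fin n → ZMod 2 => hammingNorm c = w).card = n.choose w := by
  simp only [hammingNorm_eq]
  refine (card_filter_supp (fun s => s.card = w)).trans ?_
  have : univ.filter (fun s : Finset (Fin n) => s.card = w) = Finset.powersetCard w univ := by
    rw [Finset.powersetCard_eq_filter, Finset.powerset_univ]
  rw [this, Finset.card_powersetCard, Finset.card_univ, Fintype.card_fin]

lemma row_count (c : Fin n → ZMod 2) (w : ℕ) (hc : hammingNorm c = w) (v : ℕ) :
    (univ.filter fun h : Fin n → ZMod 2 =>
        hammingNorm h = v ∧ dotProduct h c = 0).card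
      = ∑ i ∈ range (v + 1),
          if Even i then w.choose i * (n - w).choose (v - i) else 0 := by
  have hS : (supp c).card = w := hc
  have e : (univ.filter fun h : Fin n → ZMod 2 =>
        hammingNorm h = v ∧ dotProduct h c = 0)
      = univ.filter fun h : Fin n → ZMod 2 =>
          (supp h).card = v ∧ Even (((supp h) ∩ (supp c)).card) := by
    apply Finset.filter_congr
    intro h _
    rw [hammingNorm_eq, dot_eq_zero_iff]
  rw [e, card_filter_supp (fun s => s.card = v ∧ Even ((s ∩ supp c).card)),
    countN (supp c) v, hS]

lemma pi_count (r v : ℕ) (c : Fin n → ZMod 2) :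
    ((univ.filter fun H : Fin r → Fin n → ZMod 2 => ∀ i, hammingNorm (H i) = v).filter
        fun H => Matrix.mulVec (Matrix.of H) c = 0).card
      = ((univ.filter fun h : Fin n → ZMod 2 =>
          hammingNorm h = v ∧ dotProduct h c = 0).card) ^ r := by
  rw [Finset.filter_filter]
  have e : (univ.filter fun H : Fin r → Fin n → ZMod 2 =>
        (∀ i, hammingNorm (H i) = v) ∧ Matrix.mulVec (Matrix.of H) c = 0)
      = Fintype.piFinset fun _ : Fin r => univ.filter fun h : Fin n → ZMod 2 =>
          hammingNorm h = v ∧ dotProduct h c = 0 := by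
    ext H
    simp only [Finset.mem_filter, Finset.mem_univ, true_and, Fintype.mem_piFinset,
      funext_iff, Matrix.mulVec, Matrix.of_apply, Pi.zero_apply, forall_and]
  rw [e, Fintype.card_piFinset]
  simp

lemma numerator (r v w : ℕ) :
    ∑ H ∈ (univ.filter fun H : Fin r → Fin n → ZMod 2 => ∀ i, hammingNorm (H i) = v),
        ((univ.filter fun c : Fin n → ZMod 2 =>
            hammingNorm c = w ∧ Matrix.mulVec (Matrix.of H) c = 0)).card
      = n.choose w * (∑ i ∈ range (v + 1),
          if Even i then w.choose i * (n - w).choose (v - i) else 0) ^ r := by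
  have step1 : ∀ H : Fin r → Fin n → ZMod 2,
      (univ.filter fun c : Fin n → ZMod 2 =>
          hammingNorm c = w ∧ Matrix.mulVec (Matrix.of H) c = 0).card
        = ∑ c ∈ univ.filter fun c : Fin n → ZMod 2 => hammingNorm c = w,
            if Matrix.mulVec (Matrix.of H) c = 0 then 1 else 0 := by
    intro H
    rw [← Finset.filter_filter, Finset.card_filter]
  simp only [step1]
  rw [Finset.sum_comm]
  have step2 : ∀ c ∈ univ.filter fun c : Fin n → ZMod 2 => hammingNorm c = w,
      (∑ H ∈ (univ.filter fun H : Fin r → Fin n → ZMod 2 => ∀ i, hammingNorm (H i) = v),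
          if Matrix.mulVec (Matrix.of H) c = 0 then 1 else 0)
        = (∑ i ∈ range (v + 1),
            if Even i then w.choose i * (n - w).choose (v - i) else 0) ^ r := by
    intro c hc
    simp only [Finset.mem_filter, Finset.mem_univ, true_and] at hc
    rw [← Finset.card_filter, pi_count r v c, row_count c w hc v]
  rw [Finset.sum_congr rfl step2, Finset.sum_const, smul_eq_mul, weight_card]

end Stmt5Aux

lemma rho_eq {n v w : ℕ} (hv : v ≤ n) (hw : w ≤ n) :
    rho n v w = ((∑ i ∈ Finset.range (v + 1),
        if Even i then w.choose i * (n - w).choose (v - i) else 0 : ℕ) : ℚ)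
      / (n.choose v : ℚ) := by
  have hcv : (0:ℚ) < (n.choose v : ℚ) := by exact_mod_cast Nat.choose_pos hv
  have hcw : (0:ℚ) < (n.choose w : ℚ) := by exact_mod_cast Nat.choose_pos hw
  rw [Nat.cast_sum, Finset.sum_div, rho]
  rw [show Finset.range (v + 1)
      = Finset.range (min w v + 1) ∪ (Finset.range (v + 1) \ Finset.range (min w v + 1)) by
    rw [Finset.union_sdiff_of_subset (Finset.range_subset_range.2 (by omega))]]
  rw [Finset.sum_union Finset.disjoint_sdiff]
  have hzero : (∑ i ∈ Finset.range (v + 1) \ Finset.range (min w v + 1),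
      (((if Even i then (w.choose i * (n - w).choose (v - i) : ℕ) else 0 : ℕ) : ℚ)
        / (n.choose v : ℚ))) = 0 := by
    apply Finset.sum_eq_zero
    intro i hi
    simp only [Finset.mem_sdiff, Finset.mem_range] at hi
    have hwi : w < i := by omega
    rw [Nat.choose_eq_zero_of_lt hwi]
    simp
  rw [hzero, add_zero]
  apply Finset.sum_congr rfl
  intro i hi
  simp only [Finset.mem_range] at hi
  by_cases he : Even i
  · rw [if_pos he, if_pos he]
    rw [div_eq_div_iff hcw.ne' hcv.ne']
    have h0 := Stmt5Aux.choose_id (i := i) hv hw (by omega) (by omega)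
    have h1 : ((n.choose v * (v.choose i * (n - v).choose (w - i)) : ℕ) : ℚ)
        = ((n.choose w * (w.choose i * (n - w).choose (v - i)) : ℕ) : ℚ) := by
      exact_mod_cast h0
    push_cast at h1
    push_cast
    linarith [h1]
  · rw [if_neg he, if_neg he]
    simp

/-- For `H` with `r` rows i.i.d. uniform on the weight-`v` Hamming sphere, the expected
number of weight-`w` vectors in the right kernel of `H` equals `C(n,w)·ρ_w^r`. -/
theorem stmt5 (n r v w : ℕ) (hv : v ≤ n) (hr : r ≤ n) (hw : w ≤ n) :
    (∑ H ∈ Finset.univ.filter (fun H : Fin r → Fin n → ZMod 2 =>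
          ∀ i, hammingNorm (H i) = v),
        ((Finset.univ.filter (fun c : Fin n → ZMod 2 =>
            hammingNorm c = w ∧ Matrix.mulVec (Matrix.of H) c = 0)).card : ℚ))
      / ((n.choose v : ℚ)) ^ r
      = (n.choose w : ℚ) * (rho n v w) ^ r := by
  rw [← Nat.cast_sum, Stmt5Aux.numerator r v w, rho_eq hv hw, div_pow]
  push_cast
  ring
end
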